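/- For every integer n ≥ 2, s(ℤ/nℤ) = s(n), where s(ℤ/nℤ) is the least m such that the function x ↦ x^m on ℤ/nℤ agrees with some polynomial in (ℤ/nℤ)[x] of degree strictly less than m, and s(n) = min{k ∈ ℕ : n ∣ k!} is the Smarandache function. -/

import Mathlib

/-- The Smarandache function: the least `k` with `n ∣ k!`. -/
noncomputable def smarandache (n : ℕ) : ℕ := sInf {k : ℕ | n ∣ Nat.factorial k}

open Polynomial Finset
open scoped fwdDiff

/-- Coefficient of `taylor 1 Q` in low-degree situations. -/
lemma taylor_one_coeff_eq (Q : Polynomial ℤ) (j : ℕ) (hQ : Q.natDegree ≤ j + 1) :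
    (Polynomial.taylor 1 Q).coeff j = Q.coeff j + (j + 1) * Q.coeff (j + 1) := by
  rw [Polynomial.taylor_coeff]
  have hd : (Polynomial.hasseDeriv j Q).natDegree < 2 := by
    have := Polynomial.natDegree_hasseDeriv_le Q j
    have h2 : Q.natDegree - j ≤ 1 := by omega
    omega
  rw [Polynomial.eval_eq_sum_range' hd]
  simp [Finset.sum_range_succ, Polynomial.hasseDeriv_coeff, Nat.choose_succ_self_right,
    add_comm 1 j]

/-- Key lemma: the `m`-th forward difference of evaluation of a polynomial of
degree at most `m` is the constant `m! * (leading coefficient)`. -/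
lemma fwdDiff_iter_eval (m : ℕ) (Q : Polynomial ℤ) (hQ : Q.natDegree ≤ m) :
    (fwdDiff (1 : ℤ))^[m] (fun x : ℤ => Q.eval x) = fun _ => (Nat.factorial m : ℤ) * Q.coeff m := by
  induction m generalizing Q with
  | zero =>
      obtain ⟨a, rfl⟩ : ∃ a, Q = Polynomial.C a :=
        ⟨Q.coeff 0, (Polynomial.eq_C_of_natDegree_le_zero hQ)⟩
      funext x; simp
  | succ m IH =>
      set R := Polynomial.taylor 1 Q - Q with hR
      have hstep : fwdDiff (1:ℤ) (fun x : ℤ => Q.eval x) = fun x : ℤ => R.eval x := by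
        funext x
        simp [fwdDiff, hR, Polynomial.taylor_apply, Polynomial.eval_comp, add_comm]
      have hcoeffR : R.coeff m = (m + 1) * Q.coeff (m + 1) := by
        rw [hR, Polynomial.coeff_sub, taylor_one_coeff_eq Q m hQ]; ring
      have hdegR : R.natDegree ≤ m := by
        rw [Polynomial.natDegree_le_iff_coeff_eq_zero]
        intro N hN
        rcases eq_or_lt_of_le (Nat.succ_le_of_lt hN) with h | h
        · -- N = m + 1
          rw [hR, Polynomial.coeff_sub, taylor_one_coeff_eq Q N (by omega)]
          have : Q.coeff (N + 1) = 0 :=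
            Polynomial.coeff_eq_zero_of_natDegree_lt (by omega)
          rw [this]; ring
        · rw [hR, Polynomial.coeff_sub,
            Polynomial.coeff_eq_zero_of_natDegree_lt
              (lt_of_le_of_lt ((Polynomial.natDegree_taylor Q 1).le) (by omega)),
            Polynomial.coeff_eq_zero_of_natDegree_lt (by omega), sub_zero]
      calc (fwdDiff (1:ℤ))^[m+1] (fun x : ℤ => Q.eval x)
          = (fwdDiff (1:ℤ))^[m] (fwdDiff (1:ℤ) (fun x : ℤ => Q.eval x)) := by
            rw [Function.iterate_succ_apply]
        _ = (fwdDiff (1:ℤ))^[m] (fun x : ℤ => R.eval x) := by rw [hstep]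
        _ = fun _ => (Nat.factorial m : ℤ) * R.coeff m := IH R hdegR
        _ = fun _ => (Nat.factorial (m+1) : ℤ) * Q.coeff (m + 1) := by
            funext x
            rw [hcoeffR, Nat.factorial_succ]
            push_cast; ring

/-- If a monic-degree-`m`-witnessed identity `p(x) = x^m` holds on `ZMod n` with
`deg p < m`, then `n ∣ m!`. -/
lemma dvd_factorial_of_poly (n m : ℕ) (hn : 2 ≤ n) (p : Polynomial (ZMod n))
    (hdeg : p.natDegree < m) (hp : ∀ x : ZMod n, p.eval x = x ^ m) :
    n ∣ Nat.factorial m := by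
  haveI : NeZero n := ⟨by omega⟩
  -- lift p to an integer polynomial
  set P : Polynomial ℤ := ∑ i ∈ Finset.range m, Polynomial.C ((p.coeff i).val : ℤ) *
    Polynomial.X ^ i with hP
  set Q : Polynomial ℤ := Polynomial.X ^ m - P with hQdef
  have hPcoeff : ∀ N, P.coeff N = if N < m then ((p.coeff N).val : ℤ) else 0 := by
    intro N
    rw [hP, Polynomial.finset_sum_coeff]
    simp only [Polynomial.coeff_C_mul, Polynomial.coeff_X_pow, mul_ite, mul_one, mul_zero]
    rw [Finset.sum_ite_eq (Finset.range m) N fun i => ((p.coeff i).val : ℤ)]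
    simp [Finset.mem_range]
  have hQdeg : Q.natDegree ≤ m := by
    rw [Polynomial.natDegree_le_iff_coeff_eq_zero]
    intro N hN
    rw [hQdef, Polynomial.coeff_sub, Polynomial.coeff_X_pow, hPcoeff]
    simp [Nat.lt_irrefl, hN.ne', Nat.not_lt.mpr hN.le]
  have hQm : Q.coeff m = 1 := by
    rw [hQdef, Polynomial.coeff_sub, Polynomial.coeff_X_pow, hPcoeff]
    simp
  -- every integer value of Q is divisible by n
  have hval : ∀ a : ℤ, (n : ℤ) ∣ Q.eval a := by
    intro a
    rw [← ZMod.intCast_zmod_eq_zero_iff_dvd]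
    have : ((Q.eval a : ℤ) : ZMod n)
        = (a : ZMod n) ^ m - ∑ i ∈ Finset.range m, p.coeff i * (a : ZMod n) ^ i := by
      rw [hQdef, hP]
      push_cast [Polynomial.eval_sub, Polynomial.eval_pow, Polynomial.eval_X,
        Polynomial.eval_finset_sum, Polynomial.eval_mul, Polynomial.eval_C,
        ZMod.natCast_val, ZMod.intCast_cast, ZMod.intCast_zmod_cast]
      simp [ZMod.natCast_val]
    rw [this]
    have : p.eval ((a : ZMod n)) = ∑ i ∈ Finset.range m, p.coeff i * (a : ZMod n) ^ i :=
      Polynomial.eval_eq_sum_range' hdeg _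
    rw [← this, hp, sub_self]
  -- forward differences: m! = combination of values of Q
  have h1 := fwdDiff_iter_eval m Q hQdeg
  have h2 := fwdDiff_iter_eq_sum_shift (1 : ℤ) (fun x : ℤ => Q.eval x) m 0
  rw [h1, hQm, mul_one] at h2
  have h2' : (Nat.factorial m : ℤ) = ∑ k ∈ Finset.range (m + 1),
      ((-1 : ℤ) ^ (m - k) * (m.choose k)) • Q.eval ((0 : ℤ) + k • 1) := h2
  have : (n : ℤ) ∣ (Nat.factorial m : ℤ) := by
    rw [h2']
    refine Finset.dvd_sum fun k _ => ?_
    simp only [zsmul_eq_mul]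
    exact Dvd.dvd.mul_left (hval _) _
  exact_mod_cast this

/-- The Smarandache number is in the defining set. -/
lemma smarandache_mem (n : ℕ) (hn : 2 ≤ n) :
    smarandache n ∈ {m : ℕ | ∃ p : Polynomial (ZMod n), p.natDegree < m ∧
        ∀ x : ZMod n, p.eval x = x ^ m} := by
  haveI : NeZero n := ⟨by omega⟩
  haveI : Nontrivial (ZMod n) := ZMod.nontrivial_iff.mpr (by omega)
  set m := smarandache n with hm
  have hne : {k : ℕ | n ∣ Nat.factorial k}.Nonempty :=
    ⟨n, Nat.dvd_factorial (by omega) le_rfl⟩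
  have hdvd : n ∣ Nat.factorial m := Nat.sInf_mem hne
  have hm1 : 1 ≤ m := by
    by_contra h
    push_neg at h
    interval_cases m
    · simp [Nat.factorial] at hdvd; omega
  -- the witness polynomial
  set q : Polynomial (ZMod n) :=
    (descPochhammer ℤ m).map (Int.castRingHom (ZMod n)) with hq
  have hqm : q.Monic := (monic_descPochhammer ℤ m).map _
  have hqd : q.natDegree = m := by
    rw [hq, (monic_descPochhammer ℤ m).natDegree_map, descPochhammer_natDegree]
  refine ⟨Polynomial.X ^ m - q, ?_, ?_⟩
  · -- degree bound
    by_cases h0 : (Polynomial.X ^ m - q : Polynomial (ZMod n)) = 0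
    · rw [h0]; simpa using (show 0 < m by omega)
    · rw [Polynomial.natDegree_lt_iff_degree_lt h0]
      have hd : (Polynomial.X ^ m : Polynomial (ZMod n)).degree = q.degree := by
        rw [Polynomial.degree_X_pow, Polynomial.degree_eq_natDegree hqm.ne_zero, hqd]
      have := Polynomial.degree_sub_lt hd ((Polynomial.monic_X_pow m).ne_zero) (by
        rw [Polynomial.leadingCoeff_X_pow, hqm.leadingCoeff])
      rwa [Polynomial.degree_X_pow] at this
  · intro x
    have hx : x = (((x.val : ℤ) : ZMod n)) := by push_cast [ZMod.natCast_val]; rfl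
    have hqx : q.eval x = 0 := by
      rw [hq, hx]
      have : ((x.val : ℤ) : ZMod n) = (Int.castRingHom (ZMod n)) ((x.val : ℤ)) := rfl
      rw [this, Polynomial.eval_map, Polynomial.eval₂_at_apply]
      rw [descPochhammer_eval_eq_descFactorial]
      have : n ∣ (x.val).descFactorial m :=
        hdvd.trans (Nat.factorial_dvd_descFactorial _ _)
      simpa using (ZMod.natCast_eq_zero_iff _ _).mpr this
    simp [Polynomial.eval_sub, Polynomial.eval_pow, hqx]

/-- For `n ≥ 2`, the least `m` such that `x ↦ x^m` on `ℤ/nℤ` agrees with a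
polynomial of degree `< m` equals the Smarandache function `s(n)`. -/
theorem ringSmarandache_eq_smarandache (n : ℕ) (hn : 2 ≤ n) :
    sInf {m : ℕ | ∃ p : Polynomial (ZMod n), p.natDegree < m ∧
        ∀ x : ZMod n, p.eval x = x ^ m} = smarandache n := by
  apply le_antisymm
  · exact Nat.sInf_le (smarandache_mem n hn)
  · have hne : {m : ℕ | ∃ p : Polynomial (ZMod n), p.natDegree < m ∧
        ∀ x : ZMod n, p.eval x = x ^ m}.Nonempty := ⟨_, smarandache_mem n hn⟩
    obtain ⟨p, hdeg, hp⟩ := Nat.sInf_mem hne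
    exact Nat.sInf_le (dvd_factorial_of_poly n _ hn p hdeg hp)
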